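/- For n ≥ 1 and k ≥ 0, the number of sequences (u_1, ..., u_n) with 1 ≤ u_i ≤ n + k + 1 for all i, u_n > n, and satisfying condition (1), equals C_n^(k) = ((k+1)/(2n+k+1)) * binomial(2n+k+1, n). -/

import Mathlib

def gc (n k : ℕ) : ℚ := ((k : ℚ) + 1) / (2 * (n : ℚ) + (k : ℚ) + 1) * ((2 * n + k + 1).choose n : ℚ)

def cat (n : ℕ) : ℚ := 1 / ((n : ℚ) + 1) * ((2 * n).choose n : ℚ)

def Cond {n : ℕ} (u : Fin n → ℕ) : Prop :=
  ∀ i j : Fin n, i < j →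
    ¬(1 ≤ (u j : ℤ) - (((j : ℕ) : ℤ) - ((i : ℕ) : ℤ)) ∧
      (u j : ℤ) - (((j : ℕ) : ℤ) - ((i : ℕ) : ℤ)) ≤ (u i : ℤ) - 1)

lemma cat_eq_catalan (n : ℕ) : cat n = (catalan n : ℚ) := by
  have h := succ_mul_catalan_eq_centralBinom n
  rw [Nat.centralBinom] at h
  have h2 : ((n:ℚ)+1) * (catalan n : ℚ) = ((2*n).choose n : ℚ) := by exact_mod_cast h
  have hne : ((n:ℚ)+1) ≠ 0 := by positivity
  unfold cat
  field_simp
  linarith [h2]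

lemma gc_zero_left (c : ℕ) : gc 0 c = 1 := by
  unfold gc
  have hne : ((c:ℚ)+1) ≠ 0 := by positivity
  simp only [Nat.cast_zero, mul_zero, Nat.mul_zero, Nat.zero_add, Nat.choose_zero_right,
    Nat.cast_one, zero_add, mul_one]
  exact div_self hne

lemma gc_zero_right (m : ℕ) : gc m 0 = cat m := by
  have h0 := Nat.add_one_mul_choose_eq (2*m) m
  rw [Nat.choose_symm_half] at h0
  have h1 : ((2*m+1:ℚ)) * ((2*m).choose m : ℚ) = ((2*m+1).choose m : ℚ) * ((m:ℚ)+1) := by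
    exact_mod_cast h0
  unfold gc cat
  have e : 2*m+0+1 = 2*m+1 := by ring
  rw [e]
  have hne1 : (2*(m:ℚ)+0+1) ≠ 0 := by positivity
  have hne2 : ((m:ℚ)+1) ≠ 0 := by positivity
  push_cast
  field_simp
  linarith [h1]

lemma gcB (a : ℕ) : gc (a+1) 0 = gc a 1 := by
  have h1 := Nat.choose_succ_succ' (2*a+2) a
  have h2 := Nat.choose_succ_right_eq (2*a+2) a
  have e : 2*a+2-a = a+2 := by omega
  rw [e] at h2
  have h1' : ((2*a+3).choose (a+1) : ℚ) = ((2*a+2).choose a : ℚ) + ((2*a+2).choose (a+1) : ℚ) := by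
    have : 2*a+2+1 = 2*a+3 := by ring
    rw [this] at h1; exact_mod_cast h1
  have h2' : ((2*a+2).choose (a+1) : ℚ) * ((a:ℚ)+1) = ((2*a+2).choose a : ℚ) * ((a:ℚ)+2) := by
    exact_mod_cast h2
  unfold gc
  have ea : 2*(a+1)+0+1 = 2*a+3 := by ring
  have eb : 2*a+1+1 = 2*a+2 := by ring
  rw [ea, eb]
  have hne1 : (2*((a:ℚ)+1)+0+1) ≠ 0 := by positivity
  have hne2 : (2*(a:ℚ)+1+1) ≠ 0 := by positivity
  have hne3 : ((a:ℚ)+1) ≠ 0 := by positivity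
  rw [h1']
  push_cast
  field_simp
  nlinarith [h2']

lemma gcA (a c : ℕ) : gc (a+1) (c+1) = gc (a+1) c + gc a (c+2) := by
  have h1 := Nat.choose_succ_right_eq (2*a+c+3) a
  have e : 2*a+c+3-a = a+c+3 := by omega
  rw [e] at h1
  have h2 := Nat.choose_succ_succ' (2*a+c+3) a
  have h1' : ((2*a+c+3).choose (a+1) : ℚ) * ((a:ℚ)+1)
      = ((2*a+c+3).choose a : ℚ) * ((a:ℚ)+(c:ℚ)+3) := by exact_mod_cast h1
  have h2' : ((2*a+c+4).choose (a+1) : ℚ)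
      = ((2*a+c+3).choose a : ℚ) + ((2*a+c+3).choose (a+1) : ℚ) := by
    have : 2*a+c+3+1 = 2*a+c+4 := by ring
    rw [this] at h2; exact_mod_cast h2
  unfold gc
  have ea : 2*(a+1)+(c+1)+1 = 2*a+c+4 := by ring
  have eb : 2*(a+1)+c+1 = 2*a+c+3 := by ring
  have ec : 2*a+(c+2)+1 = 2*a+c+3 := by ring
  rw [ea, eb, ec]
  have hY : ((2*a+c+3).choose (a+1) : ℚ)
      = ((2*a+c+3).choose a : ℚ) * ((a:ℚ)+(c:ℚ)+3) / ((a:ℚ)+1) := by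
    have hne : ((a:ℚ)+1) ≠ 0 := by positivity
    field_simp
    linarith [h1']
  rw [h2', hY]
  have hne1 : (2*((a:ℚ)+1)+((c:ℚ)+1)+1) ≠ 0 := by positivity
  have hne2 : (2*((a:ℚ)+1)+(c:ℚ)+1) ≠ 0 := by positivity
  have hne3 : (2*(a:ℚ)+((c:ℚ)+2)+1) ≠ 0 := by positivity
  have hne4 : ((a:ℚ)+1) ≠ 0 := by positivity
  push_cast
  field_simp
  ring

lemma gc_one (a : ℕ) : gc a 1 = cat (a+1) := by rw [← gcB, gc_zero_right]

lemma gc_sum_tele (a k : ℕ) : gc (a+1) k = ∑ t ∈ Finset.range (k+1), gc a (t+1) := by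
  induction k with
  | zero => simpa using gcB a
  | succ k ih => rw [Finset.sum_range_succ, ← ih, gcA]

lemma cat_zero : cat 0 = 1 := by simp [cat]

lemma gc_conv (a : ℕ) : ∀ c, gc a (c+1) = ∑ j ∈ Finset.range (a+1), cat j * gc (a-j) c := by
  induction a with
  | zero => intro c; simp [gc_zero_left, cat_zero]
  | succ a ih =>
    intro c
    induction c with
    | zero =>
      rw [gc_one, cat_eq_catalan, catalan_succ (a+1)]
      push_cast
      rw [← Finset.sum_range (fun i => (catalan i : ℚ) * (catalan (a+1-i) : ℚ))]
      apply Finset.sum_congr rfl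
      intro j _
      rw [gc_zero_right, cat_eq_catalan, cat_eq_catalan]
    | succ c ihc =>
      have e3 : c+1+1 = c+2 := rfl
      have step : ∀ j ∈ Finset.range (a+1),
          cat j * gc (a+1-j) (c+1) = cat j * gc (a+1-j) c + cat j * gc (a-j) (c+2) := by
        intro j hj
        rw [Finset.mem_range] at hj
        have e1 : a+1-j = (a-j)+1 := by omega
        rw [e1, gcA, mul_add]
      rw [e3]
      rw [Finset.sum_range_succ, Finset.sum_congr rfl step, Finset.sum_add_distrib]
      have e2 : a+1-(a+1) = 0 := by omega
      rw [e2, gc_zero_left, mul_one]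
      have t1 : gc (a+1) (c+1) = (∑ j ∈ Finset.range (a+1), cat j * gc (a+1-j) c) + cat (a+1) := by
        rw [ihc, Finset.sum_range_succ, e2, gc_zero_left, mul_one]
      have t2 := (ih (c+2)).symm
      rw [add_right_comm, ← t1, t2]
      exact gcA a (c+1)

lemma gc_master (M c : ℕ) :
    gc (M+1) c = (∑ j ∈ Finset.range (M+1), gc (M-j) c * gc j 0)
      + ∑ d ∈ Finset.range c, gc M (d+1) := by
  have h1 := gc_sum_tele M c
  rw [Finset.sum_range_succ] at h1
  rw [h1, gc_conv M c, add_comm]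
  congr 1
  apply Finset.sum_congr rfl
  intro j _
  rw [gc_zero_right]
  ring

/-- Condition (1) in ℕ form, on the first `m` values of `u`. -/
def CondN (m : ℕ) (u : ℕ → ℕ) : Prop :=
  ∀ i j : ℕ, i < j → j < m → u j ≤ j - i ∨ u i + (j - i) ≤ u j

/-- Sequences of length `m` (padded by 0) satisfying `1 ≤ u i ≤ i + 1 + c` and condition (1). -/
def T (m c : ℕ) : Set (ℕ → ℕ) :=
  {u | (∀ i, i < m → 1 ≤ u i ∧ u i ≤ i + 1 + c) ∧ (∀ i, m ≤ i → u i = 0) ∧ CondN m u}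

lemma finite_padded (m B : ℕ) :
    {u : ℕ → ℕ | (∀ i, i < m → u i ≤ B) ∧ ∀ i, m ≤ i → u i = 0}.Finite := by
  set S := {u : ℕ → ℕ | (∀ i, i < m → u i ≤ B) ∧ ∀ i, m ≤ i → u i = 0}
  have hinj : Set.InjOn (fun (u : ℕ → ℕ) (i : Fin m) => u i) S := by
    intro u hu v hv h
    funext i
    by_cases hi : i < m
    · exact congrFun h ⟨i, hi⟩
    · rw [hu.2 i (le_of_not_gt hi), hv.2 i (le_of_not_gt hi)]
  apply Set.Finite.of_finite_image ?_ hinj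
  apply Set.Finite.subset (Set.Finite.pi (fun i : Fin m => Set.finite_Iic B))
  rintro f ⟨u, hu, rfl⟩
  intro i _
  exact hu.1 i i.2

lemma T_finite (m c : ℕ) : (T m c).Finite := by
  apply (finite_padded m (m + c)).subset
  rintro u ⟨h1, h2, -⟩
  exact ⟨fun i hi => by have := (h1 i hi).2; omega, h2⟩

noncomputable def hcount (m c : ℕ) : ℕ := (T m c).ncard

lemma hcount_zero (c : ℕ) : hcount 0 c = 1 := by
  have : T 0 c = {fun _ => 0} := by
    ext u
    simp only [T, Set.mem_setOf_eq, Set.mem_singleton_iff]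
    constructor
    · rintro ⟨-, h2, -⟩; funext i; exact h2 i (Nat.zero_le i)
    · rintro rfl
      exact ⟨fun i hi => by omega, fun i _ => rfl, fun i j _ hj => by omega⟩
  rw [hcount, this, Set.ncard_singleton]

lemma ncard_prod {α β : Type*} (s : Set α) (t : Set β) :
    (s ×ˢ t).ncard = s.ncard * t.ncard := by
  rw [← Nat.card_coe_set_eq, ← Nat.card_coe_set_eq, ← Nat.card_coe_set_eq, ← Nat.card_prod]
  exact Nat.card_congr (Equiv.Set.prod s t)

open Finset in
lemma ncard_biUnion {α ι : Type*} (s : Finset ι) (f : ι → Set α)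
    (hfin : ∀ i ∈ s, (f i).Finite)
    (hdisj : ∀ i ∈ s, ∀ j ∈ s, i ≠ j → Disjoint (f i) (f j)) :
    (⋃ i ∈ s, f i).ncard = ∑ i ∈ s, (f i).ncard := by
  classical
  induction s using Finset.induction with
  | empty => simp
  | insert a s ha ih =>
    rw [Finset.sum_insert ha, Finset.set_biUnion_insert]
    rw [Set.ncard_union_eq ?_ (hfin a (mem_insert_self a s)) ?_]
    · rw [ih (fun i hi => hfin i (mem_insert_of_mem hi))
        (fun i hi j hj hij => hdisj i (mem_insert_of_mem hi) j (mem_insert_of_mem hj) hij)]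
    · rw [Set.disjoint_left]
      intro x hx hx'
      obtain ⟨i, hi, hxi⟩ := Set.mem_iUnion₂.mp hx'
      have hne : a ≠ i := fun h => ha (h ▸ hi)
      exact (Set.disjoint_left.mp
        (hdisj a (mem_insert_self a s) i (mem_insert_of_mem hi) hne)) hx hxi
    · exact Set.Finite.biUnion s.finite_toSet
        (fun i hi => hfin i (mem_insert_of_mem hi))

lemma pieceB (M c d : ℕ) (hd1 : 1 ≤ d) (hd2 : d ≤ c) :
    {u | u ∈ T (M+1) c ∧ u M = M+1+d}.ncard = hcount M d := by
  have hbij : Set.BijOn (fun u => Function.update u M 0)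
      {u | u ∈ T (M+1) c ∧ u M = M+1+d} (T M d) := by
    refine ⟨?_, ?_, ?_⟩
    · rintro u ⟨⟨h1, h2, h3⟩, h4⟩
      show Function.update u M 0 ∈ T M d
      refine ⟨?_, ?_, ?_⟩
      · intro i hi
        have hcond := h3 i M hi (Nat.lt_succ_self M)
        have hb := h1 i (by omega)
        rw [Function.update_of_ne (by omega)]
        omega
      · intro i hi
        rcases Nat.eq_or_lt_of_le hi with rfl | hlt
        · simp
        · rw [Function.update_of_ne (by omega)]; exact h2 i (by omega)
      · intro i j hij hj
        rw [Function.update_of_ne (by omega), Function.update_of_ne (by omega)]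
        exact h3 i j hij (by omega)
    · intro u hu v hv h
      funext i
      by_cases hi : i = M
      · subst hi; rw [hu.2, hv.2]
      · have h5 := congrFun h i
        change Function.update u M 0 i = Function.update v M 0 i at h5
        rwa [Function.update_of_ne hi, Function.update_of_ne hi] at h5
    · rintro w ⟨h1, h2, h3⟩
      refine ⟨Function.update w M (M+1+d), ⟨⟨?_, ?_, ?_⟩, ?_⟩, ?_⟩
      · intro i hi
        by_cases him : i = M
        · subst him; rw [Function.update_self]; omega
        · rw [Function.update_of_ne him]
          have := h1 i (by omega)
          omega
      · intro i hi
        rw [Function.update_of_ne (by omega)]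
        exact h2 i (by omega)
      · intro i j hij hj
        by_cases hjm : j = M
        · subst hjm
          rw [Function.update_self, Function.update_of_ne (by omega)]
          have := h1 i (by omega)
          omega
        · rw [Function.update_of_ne hjm, Function.update_of_ne (by omega)]
          exact h3 i j hij (by omega)
      · rw [Function.update_self]
      · show Function.update (Function.update w M (M+1+d)) M 0 = w
        funext i
        by_cases hi : i = M
        · subst hi; rw [Function.update_self, h2 i le_rfl]
        · rw [Function.update_of_ne hi, Function.update_of_ne hi]
  rw [hcount, ← hbij.image_eq, Set.ncard_image_of_injOn hbij.injOn]

def trunc (A : ℕ) (u : ℕ → ℕ) : ℕ → ℕ := fun i => if i < A then u i else 0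
def shiftTr (A B : ℕ) (u : ℕ → ℕ) : ℕ → ℕ := fun i => if i < B then u (i+A) else 0
def splitMap (A B : ℕ) (u : ℕ → ℕ) : (ℕ → ℕ) × (ℕ → ℕ) := (trunc A u, shiftTr A B u)
def glue (A B s : ℕ) (v w : ℕ → ℕ) : ℕ → ℕ :=
  fun i => if i < A then v i else if i < A+B then w (i-A) else if i = A+B then s else 0

lemma trunc_lt {A i : ℕ} (u : ℕ → ℕ) (h : i < A) : trunc A u i = u i := if_pos h
lemma trunc_ge {A i : ℕ} (u : ℕ → ℕ) (h : A ≤ i) : trunc A u i = 0 := if_neg (by omega)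
lemma shiftTr_lt {B i : ℕ} (A : ℕ) (u : ℕ → ℕ) (h : i < B) : shiftTr A B u i = u (i+A) :=
  if_pos h
lemma shiftTr_ge {B i : ℕ} (A : ℕ) (u : ℕ → ℕ) (h : B ≤ i) : shiftTr A B u i = 0 :=
  if_neg (by omega)
lemma glue_a {A B s : ℕ} {v w : ℕ → ℕ} {i : ℕ} (h : i < A) : glue A B s v w i = v i :=
  if_pos h
lemma glue_b {A B s : ℕ} {v w : ℕ → ℕ} {i : ℕ} (h1 : A ≤ i) (h2 : i < A+B) :
    glue A B s v w i = w (i-A) := by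
  unfold glue; rw [if_neg (by omega), if_pos h2]
lemma glue_c {A B s : ℕ} {v w : ℕ → ℕ} : glue A B s v w (A+B) = s := by
  unfold glue; rw [if_neg (by omega), if_neg (by omega), if_pos rfl]
lemma glue_d {A B s : ℕ} {v w : ℕ → ℕ} {i : ℕ} (h : A+B < i) : glue A B s v w i = 0 := by
  unfold glue; rw [if_neg (by omega), if_neg (by omega), if_neg (by omega)]

lemma pieceA (A B c : ℕ) :
    {u | u ∈ T (A+B+1) c ∧ u (A+B) = B+1}.ncard = hcount A c * hcount B 0 := by
  have hbij : Set.BijOn (splitMap A B)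
      {u | u ∈ T (A+B+1) c ∧ u (A+B) = B+1} (T A c ×ˢ T B 0) := by
    refine ⟨?_, ?_, ?_⟩
    · rintro u ⟨⟨h1, h2, h3⟩, h4⟩
      rw [Set.mem_prod]
      constructor
      · show trunc A u ∈ T A c
        refine ⟨?_, ?_, ?_⟩
        · intro i hi
          rw [trunc_lt u hi]
          exact h1 i (by omega)
        · intro i hi
          exact trunc_ge u hi
        · intro i j hij hj
          rw [trunc_lt u hj, trunc_lt u (show i < A by omega)]
          exact h3 i j hij (by omega)
      · show shiftTr A B u ∈ T B 0
        refine ⟨?_, ?_, ?_⟩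
        · intro i hi
          rw [shiftTr_lt A u hi]
          have hc := h3 (i+A) (A+B) (by omega) (by omega)
          have hb := h1 (i+A) (by omega)
          omega
        · intro i hi
          exact shiftTr_ge A u hi
        · intro i j hij hj
          rw [shiftTr_lt A u hj, shiftTr_lt A u (show i < B by omega)]
          have hc := h3 (i+A) (j+A) (by omega) (by omega)
          omega
    · rintro u ⟨⟨hu1, hu2, hu3⟩, hu4⟩ v ⟨⟨hv1, hv2, hv3⟩, hv4⟩ h
      have hf := congrArg Prod.fst h
      have hg := congrArg Prod.snd h
      change trunc A u = trunc A v at hf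
      change shiftTr A B u = shiftTr A B v at hg
      funext i
      by_cases hiA : i < A
      · have := congrFun hf i
        rwa [trunc_lt u hiA, trunc_lt v hiA] at this
      · by_cases hiM : i < A+B
        · have := congrFun hg (i-A)
          rw [shiftTr_lt A u (by omega), shiftTr_lt A v (by omega)] at this
          have e : i - A + A = i := by omega
          rwa [e] at this
        · by_cases hiE : i = A+B
          · rw [hiE, hu4, hv4]
          · rw [hu2 i (by omega), hv2 i (by omega)]
    · rintro ⟨v, w⟩ hp
      rw [Set.mem_prod] at hp
      change v ∈ T A c ∧ w ∈ T B 0 at hp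
      obtain ⟨⟨hv1, hv2, hv3⟩, hw1, hw2, hw3⟩ := hp
      refine ⟨glue A B (B+1) v w, ⟨⟨?_, ?_, ?_⟩, ?_⟩, ?_⟩
      · intro i hi
        by_cases hiA : i < A
        · rw [glue_a hiA]; have := hv1 i hiA; omega
        · by_cases hiM : i < A+B
          · rw [glue_b (by omega) hiM]; have := hw1 (i-A) (by omega); omega
          · have hiE : i = A+B := by omega
            rw [hiE, glue_c]; omega
      · intro i hi
        exact glue_d (by omega)
      · intro i j hij hj
        by_cases hjE : j = A+B
        · rw [hjE, glue_c]
          by_cases hiA : i < A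
          · left; omega
          · right
            rw [glue_b (by omega) (by omega)]
            have := hw1 (i-A) (by omega)
            omega
        · by_cases hjA : j < A
          · rw [glue_a hjA, glue_a (by omega)]
            exact hv3 i j hij hjA
          · by_cases hiA : i < A
            · left
              rw [glue_b (by omega) (by omega)]
              have := hw1 (j-A) (by omega)
              omega
            · rw [glue_b (by omega) (by omega), glue_b (by omega) (by omega)]
              have := hw3 (i-A) (j-A) (by omega) (by omega)
              omega
      · rw [glue_c]
      · show splitMap A B (glue A B (B+1) v w) = (v, w)
        unfold splitMap
        refine Prod.ext ?_ ?_
        · show trunc A (glue A B (B+1) v w) = v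
          funext i
          by_cases hiA : i < A
          · rw [trunc_lt _ hiA, glue_a hiA]
          · rw [trunc_ge _ (by omega)]
            exact (hv2 i (by omega)).symm
        · show shiftTr A B (glue A B (B+1) v w) = w
          funext i
          by_cases hiB : i < B
          · rw [shiftTr_lt _ _ hiB, glue_b (by omega) (by omega)]
            have e : i + A - A = i := by omega
            rw [e]
          · rw [shiftTr_ge _ _ (by omega)]
            exact (hw2 i (by omega)).symm
  rw [← Set.ncard_image_of_injOn hbij.injOn, hbij.image_eq, ncard_prod, hcount, hcount]

lemma piece_finite (M c : ℕ) (Q : (ℕ → ℕ) → Prop) :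
    {u | u ∈ T M c ∧ Q u}.Finite :=
  (T_finite M c).subset (fun _ h => h.1)

lemma T_split (M c : ℕ) :
    T (M+1) c = ⋃ t ∈ Finset.range (M+1+c), {u | u ∈ T (M+1) c ∧ u M = t+1} := by
  ext u
  simp only [Set.mem_iUnion, Finset.mem_range, Set.mem_setOf_eq, exists_prop]
  constructor
  · intro hu
    have hb := hu.1 M (by omega)
    exact ⟨u M - 1, by omega, hu, by omega⟩
  · rintro ⟨t, -, hu, -⟩; exact hu

lemma hcount_rec (M c : ℕ) :
    hcount (M+1) c = (∑ j ∈ Finset.range (M+1), hcount (M-j) c * hcount j 0)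
      + ∑ d ∈ Finset.range c, hcount M (d+1) := by
  rw [hcount, T_split]
  rw [ncard_biUnion _ _ (fun t _ => piece_finite (M+1) c _)
    (fun i _ j _ hij => by
      rw [Set.disjoint_left]
      rintro u ⟨-, h1⟩ ⟨-, h2⟩
      omega)]
  rw [Finset.sum_range_add (fun t => {u | u ∈ T (M+1) c ∧ u M = t+1}.ncard) (M+1) c]
  congr 1
  · apply Finset.sum_congr rfl
    intro t ht
    rw [Finset.mem_range] at ht
    have e : M - t + t = M := by omega
    have h := pieceA (M-t) t c
    rw [e] at h
    exact h
  · apply Finset.sum_congr rfl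
    intro d hd
    rw [Finset.mem_range] at hd
    have e : M+1+d+1 = M+1+(d+1) := by omega
    rw [e]
    exact pieceB M c (d+1) (by omega) (by omega)

def US (n k : ℕ) : Set (ℕ → ℕ) :=
  {u | (∀ i, i < n → 1 ≤ u i ∧ u i ≤ n+k+1) ∧ (∀ i, n ≤ i → u i = 0) ∧
       n+1 ≤ u (n-1) ∧ CondN n u}

lemma US_finite (n k : ℕ) : (US n k).Finite := by
  apply (finite_padded n (n+k+1)).subset
  rintro u ⟨h1, h2, -, -⟩
  exact ⟨fun i hi => (h1 i hi).2, h2⟩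

lemma pieceC (N k t : ℕ) (ht : t ≤ k) :
    {u | u ∈ US (N+1) k ∧ u N = N+2+t}.ncard = hcount N (t+1) := by
  have hbij : Set.BijOn (fun u => Function.update u N 0)
      {u | u ∈ US (N+1) k ∧ u N = N+2+t} (T N (t+1)) := by
    refine ⟨?_, ?_, ?_⟩
    · rintro u ⟨⟨h1, h2, h5, h3⟩, h4⟩
      show Function.update u N 0 ∈ T N (t+1)
      refine ⟨?_, ?_, ?_⟩
      · intro i hi
        have hcond := h3 i N hi (Nat.lt_succ_self N)
        have hb := h1 i (by omega)
        rw [Function.update_of_ne (by omega)]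
        omega
      · intro i hi
        rcases Nat.eq_or_lt_of_le hi with rfl | hlt
        · simp
        · rw [Function.update_of_ne (by omega)]; exact h2 i (by omega)
      · intro i j hij hj
        rw [Function.update_of_ne (by omega), Function.update_of_ne (by omega)]
        exact h3 i j hij (by omega)
    · rintro u hu v hv h
      funext i
      by_cases hi : i = N
      · rw [hi, hu.2, hv.2]
      · have h5 := congrFun h i
        change Function.update u N 0 i = Function.update v N 0 i at h5
        rwa [Function.update_of_ne hi, Function.update_of_ne hi] at h5
    · rintro w ⟨h1, h2, h3⟩
      refine ⟨Function.update w N (N+2+t), ⟨⟨?_, ?_, ?_, ?_⟩, ?_⟩, ?_⟩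
      · intro i hi
        by_cases him : i = N
        · rw [him, Function.update_self]; omega
        · rw [Function.update_of_ne him]
          have := h1 i (by omega)
          omega
      · intro i hi
        rw [Function.update_of_ne (by omega)]
        exact h2 i (by omega)
      · show N+1+1 ≤ Function.update w N (N+2+t) (N+1-1)
        have e : N+1-1 = N := by omega
        rw [e, Function.update_self]
        omega
      · intro i j hij hj
        by_cases hjm : j = N
        · rw [hjm, Function.update_self, Function.update_of_ne (by omega)]
          have := h1 i (by omega)
          omega
        · rw [Function.update_of_ne hjm, Function.update_of_ne (by omega)]
          exact h3 i j hij (by omega)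
      · rw [Function.update_self]
      · show Function.update (Function.update w N (N+2+t)) N 0 = w
        funext i
        by_cases hi : i = N
        · rw [hi, Function.update_self, h2 N le_rfl]
        · rw [Function.update_of_ne hi, Function.update_of_ne hi]
  rw [hcount, ← hbij.image_eq, Set.ncard_image_of_injOn hbij.injOn]

lemma US_split (N k : ℕ) :
    US (N+1) k = ⋃ t ∈ Finset.range (k+1), {u | u ∈ US (N+1) k ∧ u N = N+2+t} := by
  ext u
  simp only [Set.mem_iUnion, Finset.mem_range, Set.mem_setOf_eq, exists_prop]
  constructor
  · intro hu
    have hb := hu.1 N (by omega)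
    have hl := hu.2.2.1
    have e : N+1-1 = N := by omega
    rw [e] at hl
    exact ⟨u N - (N+2), by omega, hu, by omega⟩
  · rintro ⟨t, -, hu, -⟩; exact hu

lemma US_ncard (N k : ℕ) :
    (US (N+1) k).ncard = ∑ t ∈ Finset.range (k+1), hcount N (t+1) := by
  rw [US_split]
  rw [ncard_biUnion _ _ (fun t _ => (US_finite (N+1) k).subset (fun _ h => h.1))
    (fun i _ j _ hij => by
      rw [Set.disjoint_left]
      rintro u ⟨-, h1⟩ ⟨-, h2⟩
      omega)]
  apply Finset.sum_congr rfl
  intro t ht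
  rw [Finset.mem_range] at ht
  exact pieceC N k t (by omega)

lemma hcount_eq_gc : ∀ m c : ℕ, (hcount m c : ℚ) = gc m c := by
  intro m
  induction m using Nat.strong_induction_on with
  | _ m ih =>
    match m with
    | 0 => intro c; rw [hcount_zero, gc_zero_left, Nat.cast_one]
    | Nat.succ M =>
      intro c
      rw [hcount_rec]
      push_cast
      rw [gc_master]
      congr 1
      · apply Finset.sum_congr rfl
        intro j hj
        rw [Finset.mem_range] at hj
        rw [ih (M-j) (by omega) c, ih j (by omega) 0]
      · apply Finset.sum_congr rfl
        intro d _
        rw [ih M (by omega) (d+1)]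

def padF (n : ℕ) (u : Fin n → ℕ) : ℕ → ℕ := fun i => if h : i < n then u ⟨i, h⟩ else 0

lemma padF_lt {n i : ℕ} (u : Fin n → ℕ) (h : i < n) : padF n u i = u ⟨i, h⟩ := dif_pos h

lemma padF_ge {n i : ℕ} (u : Fin n → ℕ) (h : n ≤ i) : padF n u i = 0 := dif_neg (by omega)

lemma MS_eq (n k : ℕ) (hn : 1 ≤ n) :
    ({u : Fin n → ℕ | (∀ i, 1 ≤ u i ∧ u i ≤ n + k + 1) ∧ n < u ⟨n - 1, Nat.sub_lt hn Nat.one_pos⟩ ∧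
      Cond u}).ncard = (US n k).ncard := by
  have hinj : Function.Injective (padF n) := by
    intro u v h
    funext i
    have := congrFun h i.val
    rwa [padF_lt u i.isLt, padF_lt v i.isLt] at this
  rw [← Set.ncard_image_of_injective _ hinj]
  congr 1
  ext w
  constructor
  · rintro ⟨u, ⟨h1, h2, h3⟩, rfl⟩
    refine ⟨?_, ?_, ?_, ?_⟩
    · intro i hi
      rw [padF_lt u hi]
      exact h1 ⟨i, hi⟩
    · intro i hi
      exact padF_ge u hi
    · rw [padF_lt u (show n-1 < n by omega)]
      omega
    · intro i j hij hj
      rw [padF_lt u hj, padF_lt u (show i < n by omega)]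
      have := h3 ⟨i, by omega⟩ ⟨j, hj⟩ (by exact hij)
      simp only [Fin.val_mk] at this
      omega
  · rintro ⟨h1, h2, h3, h4⟩
    refine ⟨fun i => w i.val, ⟨?_, ?_, ?_⟩, ?_⟩
    · intro i
      exact h1 i.val i.isLt
    · show n < w ((⟨n - 1, by omega⟩ : Fin n) : ℕ)
      simp only [Fin.val_mk]
      omega
    · intro i j hij
      have := h4 i.val j.val hij j.isLt
      show ¬(1 ≤ (w j.val : ℤ) - ((j.val : ℤ) - (i.val : ℤ)) ∧
        (w j.val : ℤ) - ((j.val : ℤ) - (i.val : ℤ)) ≤ (w i.val : ℤ) - 1)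
      omega
    · funext i
      by_cases hi : i < n
      · rw [padF_lt _ hi]
      · rw [padF_ge _ (by omega)]
        exact (h2 i (by omega)).symm

theorem stmt9 (n k : ℕ) (hn : 1 ≤ n) :
    ({u : Fin n → ℕ | (∀ i, 1 ≤ u i ∧ u i ≤ n + k + 1) ∧ n < u ⟨n - 1, by omega⟩ ∧
      Cond u}.ncard : ℚ) = gc n k := by
  obtain ⟨N, rfl⟩ : ∃ N, n = N+1 := ⟨n-1, by omega⟩
  rw [MS_eq (N+1) k hn, US_ncard N k]
  push_cast
  rw [Finset.sum_congr rfl (fun t _ => hcount_eq_gc N (t+1))]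
  exact (gc_sum_tele N k).symm
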